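/- Let k ≥ 1 be an integer, let G be a graph and let F ⊆ V(G) be a strongly linked set of size 3k in G. Then the treewidth of G is at least k; that is, every tree-decomposition (T, β) of G has width at least k (some bag β(t) has size at least k+1). -/

import Mathlib

open SimpleGraph

/-- `(A, B)` is a separation of the graph `G`: `A ∪ B = V(G)` and there is no edge of `G`
with one endpoint in `A \ B` and the other in `B \ A`.  Its order is `(A ∩ B).ncard`. -/
def IsSep {V : Type*} (G : SimpleGraph V) (A B : Set V) : Prop :=
  A ∪ B = Set.univ ∧ ∀ a b : V, a ∈ A \ B → b ∈ B \ A → ¬ G.Adj a b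

/-- `X` is an `α`-balanced separator for `S` in `G`: every connected component `C` of
`G − X` satisfies `|V(C) ∩ S| ≤ α·|S|`. -/
def BalancedSeparator {V : Type*} (G : SimpleGraph V) (α : ℝ) (S X : Set V) : Prop :=
  ∀ C : (G.induce Xᶜ).ConnectedComponent,
    (((Subtype.val '' C.supp) ∩ S).ncard : ℝ) ≤ α * (S.ncard : ℝ)

/-- `S` is `(q, α)`-well-linked in `G`: there is no `α`-balanced separator for `S` of size
at most `q`. -/
def WellLinked {V : Type*} (G : SimpleGraph V) (q : ℕ) (α : ℝ) (S : Set V) : Prop :=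
  ∀ X : Set V, X.ncard ≤ q → ¬ BalancedSeparator G α S X

/-- `F` is `S`-free in `G` (with respect to the constant `α`): for every separation
`(A₁, A₂)` of `G` of order less than `|F|` and every side containing `F`, that side
contains more than `α·|S|` vertices of `S`. -/
def SFree {V : Type*} (G : SimpleGraph V) (α : ℝ) (S F : Set V) : Prop :=
  ∀ A₁ A₂ : Set V, IsSep G A₁ A₂ → (A₁ ∩ A₂).ncard < F.ncard →
    (F ⊆ A₁ → α * (S.ncard : ℝ) < ((A₁ ∩ S).ncard : ℝ)) ∧
    (F ⊆ A₂ → α * (S.ncard : ℝ) < ((A₂ ∩ S).ncard : ℝ))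

/-- `S` is strongly linked in `G`: for every partition `{S₁, S₂}` of `S` into two nonempty
parts, there is no separation `(A₁, A₂)` of `G` with `S₁ ⊆ A₁`, `S₂ ⊆ A₂` and
`|A₁ ∩ A₂| < min {|S₁|, |S₂|}`. -/
def StronglyLinked {V : Type*} (G : SimpleGraph V) (S : Set V) : Prop :=
  ∀ S₁ S₂ A₁ A₂ : Set V, S₁ ∪ S₂ = S → Disjoint S₁ S₂ → S₁.Nonempty → S₂.Nonempty →
    IsSep G A₁ A₂ → S₁ ⊆ A₁ → S₂ ⊆ A₂ →
    min S₁.ncard S₂.ncard ≤ (A₁ ∩ A₂).ncard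

/-- `G[A₁] ∪ G[A₂] ∪ G[A₃] = G`: the three induced subgraphs jointly cover all vertices and
all edges of `G`. -/
def TriCover {V : Type*} (G : SimpleGraph V) (A₁ A₂ A₃ : Set V) : Prop :=
  A₁ ∪ A₂ ∪ A₃ = Set.univ ∧
  ∀ u v : V, G.Adj u v →
    (u ∈ A₁ ∧ v ∈ A₁) ∨ (u ∈ A₂ ∧ v ∈ A₂) ∨ (u ∈ A₃ ∧ v ∈ A₃)

/-- `T` is a tangle of order `k` in `G`: `T` consists of separations of order less than `k`,
orients every such separation (contains exactly one of `(A,B)` and `(B,A)`), and no three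
small sides of members of `T` cover `G`. -/
def IsTangle {V : Type*} (G : SimpleGraph V) (k : ℕ) (T : Set (Set V × Set V)) : Prop :=
  (∀ p ∈ T, IsSep G p.1 p.2 ∧ (p.1 ∩ p.2).ncard < k) ∧
  (∀ A B : Set V, IsSep G A B → (A ∩ B).ncard < k → ((A, B) ∈ T ↔ (B, A) ∉ T)) ∧
  (∀ p₁ ∈ T, ∀ p₂ ∈ T, ∀ p₃ ∈ T, ¬ TriCover G p₁.1 p₂.1 p₃.1)

/-- `(T, β)` is a tree-decomposition of `G`: `T` is a tree, every vertex of `G` lies in some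
bag, every edge of `G` lies in some bag, and for every vertex `v` the nodes whose bag
contains `v` induce a (connected, hence nonempty) subtree of `T`. -/
def IsTreeDecomp {V ι : Type*} (G : SimpleGraph V) (T : SimpleGraph ι) (β : ι → Set V) :
    Prop :=
  T.IsTree ∧
  (∀ v : V, ∃ t : ι, v ∈ β t) ∧
  (∀ u v : V, G.Adj u v → ∃ t : ι, u ∈ β t ∧ v ∈ β t) ∧
  (∀ v : V, (T.induce {t : ι | v ∈ β t}).Connected)


set_option linter.unreachableTactic false
set_option linter.unusedTactic false

section TreeSide

variable {ι : Type} {T : SimpleGraph ι}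

/-- the set of nodes on the `t`-side of the edge `{s,t}` of `T`. -/
def tside (T : SimpleGraph ι) (s t : ι) : Set ι :=
  {n : ι | ∃ w : T.Walk t n, s(s, t) ∉ w.edges}

lemma tside_self (s t : ι) : t ∈ tside T s t := ⟨Walk.nil, by simp⟩

lemma tside_extend {s t n m : ι} (hn : n ∈ tside T s t) (h : T.Adj n m)
    (hne : s(n, m) ≠ s(s, t)) : m ∈ tside T s t := by
  obtain ⟨w, hw⟩ := hn
  refine ⟨w.concat h, ?_⟩
  rw [Walk.edges_concat, List.concat_eq_append, List.mem_append]
  rintro (h1 | h1)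
  · exact hw h1
  · simp only [List.mem_singleton] at h1; exact hne h1.symm

private lemma tside_cover_aux {s t : ι} {a c : ι} (w : T.Walk a c) (hc : c = t) :
    a ∈ tside T s t ∨ a ∈ tside T t s := by
  induction w with
  | nil =>
    cases hc
    exact Or.inl (tside_self _ _)
  | @cons a b c h w ih =>
    rcases ih hc with hb | hb
    · by_cases he : s(b, a) = s(s, t)
      · rw [Sym2.eq_iff] at he
        rcases he with ⟨rfl, rfl⟩ | ⟨rfl, rfl⟩
        · exact Or.inl (tside_self _ _)
        · exact Or.inr (tside_self _ _)
      · exact Or.inl (tside_extend hb h.symm he)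
    · by_cases he : s(b, a) = s(t, s)
      · rw [Sym2.eq_iff] at he
        rcases he with ⟨rfl, rfl⟩ | ⟨rfl, rfl⟩
        · exact Or.inr (tside_self _ _)
        · exact Or.inl (tside_self _ _)
      · exact Or.inr (tside_extend hb h.symm he)

lemma tside_cover (hC : T.Connected) (s t n : ι) :
    n ∈ tside T s t ∨ n ∈ tside T t s := by
  obtain ⟨w⟩ := hC.preconnected n t
  exact tside_cover_aux w rfl

lemma tside_disj (hT : T.IsTree) {s t : ι} (hst : T.Adj s t) (n : ι)
    (h1 : n ∈ tside T s t) (h2 : n ∈ tside T t s) : False := by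
  obtain ⟨w1, hw1⟩ := h1
  obtain ⟨w2, hw2⟩ := h2
  have hbr : T.IsBridge s(s, t) :=
    (isAcyclic_iff_forall_adj_isBridge.mp hT.IsAcyclic) hst
  rw [isBridge_iff] at hbr
  apply hbr
  rw [reachable_delete_edges_iff_exists_walk]
  refine ⟨w2.append w1.reverse, ?_⟩
  rw [Walk.edges_append, List.mem_append]
  rintro (h | h)
  · rw [Sym2.eq_swap] at hw2; exact hw2 h
  · rw [Walk.edges_reverse, List.mem_reverse] at h
    exact hw1 h

lemma tside_mono (hT : T.IsTree) {s t u : ι} (hst : T.Adj s t) (htu : T.Adj t u)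
    (hus : u ≠ s) : tside T t u ⊆ tside T s t := by
  classical
  rintro n ⟨w, hw⟩
  by_cases he : s(s, t) ∈ w.edges
  · exfalso
    have hts : t ∈ w.support := Walk.snd_mem_support_of_mem_edges w he
    have hPe : s(t, u) ∉ (w.takeUntil t hts).edges :=
      fun hc => hw (Walk.edges_takeUntil_subset w hts hc)
    have hbr : T.IsBridge s(t, u) :=
      (isAcyclic_iff_forall_adj_isBridge.mp hT.IsAcyclic) htu
    rw [isBridge_iff] at hbr
    apply hbr
    rw [reachable_delete_edges_iff_exists_walk]
    exact ⟨(w.takeUntil t hts).reverse, by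
      rw [Walk.edges_reverse, List.mem_reverse]; exact hPe⟩
  · refine ⟨Walk.cons htu w, ?_⟩
    rw [Walk.edges_cons, List.mem_cons]
    rintro (h | h)
    · rw [Sym2.eq_iff] at h
      rcases h with ⟨h1, h2⟩ | ⟨h1, h2⟩
      · first
        | exact hst.ne h1 | exact hst.ne h1.symm
        | exact hst.ne' h1 | exact hst.ne' h1.symm
      · first
        | exact hus h2 | exact hus h2.symm | exact hus h1 | exact hus h1.symm
    · exact he h

private lemma tside_branch_aux {t : ι} {a c : ι} (w : T.Walk a c) (hc : c = t)
    (hnt : a ≠ t) : ∃ s, T.Adj t s ∧ a ∈ tside T t s := by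
  induction w with
  | nil => exact absurd hc hnt
  | @cons a b c h w ih =>
    by_cases hbt : b = t
    · exact ⟨a, (hbt ▸ h).symm, tside_self t a⟩
    · obtain ⟨s, hts, hbs⟩ := ih hc hbt
      refine ⟨s, hts, tside_extend hbs h.symm ?_⟩
      intro hh
      rw [Sym2.eq_iff] at hh
      rcases hh with ⟨h1, h2⟩ | ⟨h1, h2⟩
      · first
        | exact hbt h1 | exact hnt h2 | exact hbt h1.symm | exact hnt h2.symm
      · first
        | exact hbt h1 | exact hnt h2 | exact hbt h2 | exact hnt h1
        | exact hbt h1.symm | exact hnt h2.symm | exact hbt h2.symm | exact hnt h1.symm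

lemma tside_branch_exists (hC : T.Connected) {t n : ι} (hnt : n ≠ t) :
    ∃ s, T.Adj t s ∧ n ∈ tside T t s := by
  obtain ⟨w⟩ := hC.preconnected n t
  exact tside_branch_aux w rfl hnt

lemma tside_cross {s t a n : ι}
    (ha : a ∉ tside T s t) (hn : n ∈ tside T s t) (w : T.Walk a n) :
    s(s, t) ∈ w.edges := by
  by_contra he
  apply ha
  obtain ⟨w1, hw1⟩ := hn
  refine ⟨w1.append w.reverse, ?_⟩
  rw [Walk.edges_append, List.mem_append]
  rintro (h | h)
  · exact hw1 h
  · rw [Walk.edges_reverse, List.mem_reverse] at h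
    exact he h

end TreeSide

section TD

variable {V : Type*} {ι : Type} {T : SimpleGraph ι}

/-- vertices of `G` whose bags live on the `t`-side of the edge `{s,t}`. -/
def vside (T : SimpleGraph ι) (β : ι → Set V) (s t : ι) : Set V :=
  {v : V | ∃ n ∈ tside T s t, v ∈ β n}

lemma walk_induce {S : Set ι} {x y : ↥S} (w : (T.induce S).Walk x y) :
    ∃ w' : T.Walk x.1 y.1, ∀ n ∈ w'.support, n ∈ S := by
  induction w with
  | nil => exact ⟨Walk.nil, by simp⟩
  | @cons a b c h w ih =>
    obtain ⟨w', hw'⟩ := ih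
    refine ⟨Walk.cons (show T.Adj a.1 b.1 from h) w', ?_⟩
    intro n hn
    rw [Walk.support_cons, List.mem_cons] at hn
    rcases hn with rfl | hn
    · exact a.2
    · exact hw' n hn
end TD

section FactB
variable {V : Type*} [Fintype V] {G : SimpleGraph V} {F : Set V} {k : ℕ}

/-- Key Fact B : any separation of small order has a side containing few `F`-vertices. -/
lemma factB (hF : StronglyLinked G F) (hFcard : F.ncard = 3 * k)
    {A B : Set V} (hsep : IsSep G A B) (h2 : 2 * (A ∩ B).ncard + 2 ≤ 3 * k) :
    (F ∩ A).ncard ≤ (A ∩ B).ncard ∨ (F ∩ B).ncard ≤ (A ∩ B).ncard := by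
  by_contra hcon
  push_neg at hcon
  obtain ⟨hA, hB⟩ := hcon
  set r := (A ∩ B).ncard with hr
  -- choose S₁ with F ∩ (A \ B) ⊆ S₁ ⊆ F ∩ A and |S₁| = max (|F∩(A\B)|) (r+1)
  have hsub : F ∩ (A \ B) ⊆ F ∩ A := Set.inter_subset_inter_right _ Set.diff_subset
  have hnle : (F ∩ (A \ B)).ncard ≤ max (F ∩ (A \ B)).ncard (r + 1) := le_max_left _ _
  have hmaxle : max (F ∩ (A \ B)).ncard (r + 1) ≤ (F ∩ A).ncard := by
    refine max_le (Set.ncard_le_ncard hsub (Set.toFinite _)) hA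
  obtain ⟨S₁, hS₁l, hS₁r, hS₁card⟩ := Set.exists_subsuperset_card_eq hsub hnle hmaxle
  set S₂ := F \ S₁ with hS₂
  have hS₁F : S₁ ⊆ F := hS₁r.trans Set.inter_subset_left
  have hunion : S₁ ∪ S₂ = F := Set.union_diff_cancel hS₁F
  have hdisj : Disjoint S₁ S₂ := Set.disjoint_sdiff_right
  have hS₂card : S₂.ncard = 3 * k - S₁.ncard := by
    rw [hS₂, Set.ncard_diff hS₁F (Set.toFinite _), hFcard]
  have hFAB : F \ (A \ B) = F ∩ B := by
    ext v
    constructor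
    · rintro ⟨hvF, hv⟩
      refine ⟨hvF, ?_⟩
      by_cases hvA : v ∈ A
      · by_contra hvB; exact hv ⟨hvA, hvB⟩
      · have h1 : v ∈ A ∪ B := by rw [hsep.1]; trivial
        rcases h1 with h1 | h1
        · exact absurd h1 hvA
        · exact h1
    · rintro ⟨hvF, hvB⟩
      exact ⟨hvF, fun hv => hv.2 hvB⟩
  have hr1S₁ : r + 1 ≤ S₁.ncard := by rw [hS₁card]; exact le_max_right _ _
  have hr1S₂ : r + 1 ≤ S₂.ncard := by
    rw [hS₂card, hS₁card]
    rcases max_cases (F ∩ (A \ B)).ncard (r + 1) with ⟨h, _⟩ | ⟨h, _⟩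
    · rw [h]
      have : (F ∩ (A \ B)).ncard + (F ∩ B).ncard = 3 * k := by
        have hd : (F ∩ (A \ B)).ncard + (F \ (A \ B)).ncard = F.ncard := by
          have h5 := Set.ncard_diff_add_ncard_of_subset
            (Set.inter_subset_left : F ∩ (A \ B) ⊆ F) (Set.toFinite F)
          have h6 : F \ (F ∩ (A \ B)) = F \ (A \ B) := by
            ext x; simp only [Set.mem_diff, Set.mem_inter_iff]; tauto
          rw [h6] at h5
          omega
        rw [hFAB] at hd; omega
      omega
    · rw [h]; omega
  have hS₁A : S₁ ⊆ A := hS₁r.trans Set.inter_subset_right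
  have hS₂B : S₂ ⊆ B := by
    intro v hv
    have hvF : v ∈ F := hv.1
    have : v ∉ A \ B := fun hh => hv.2 (hS₁l ⟨hvF, hh⟩)
    by_cases hvA : v ∈ A
    · by_contra hvB; exact this ⟨hvA, hvB⟩
    · have h1 : v ∈ A ∪ B := by rw [hsep.1]; trivial
      rcases h1 with h1 | h1
      · exact absurd h1 hvA
      · exact h1
  have hne₁ : S₁.Nonempty := by
    rw [← Set.ncard_pos (Set.toFinite _)] ; omega
  have hne₂ : S₂.Nonempty := by
    rw [← Set.ncard_pos (Set.toFinite _)] ; omega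
  have := hF S₁ S₂ A B hunion hdisj hne₁ hne₂ hsep hS₁A hS₂B
  rw [← hr] at this
  omega

end FactB


section TD2
variable {V : Type*} {G : SimpleGraph V} {ι : Type} {T : SimpleGraph ι} {β : ι → Set V}

lemma vside_cover (hTD : IsTreeDecomp G T β) (s t : ι) (v : V) :
    v ∈ vside T β s t ∪ vside T β t s := by
  obtain ⟨n, hn⟩ := hTD.2.1 v
  rcases tside_cover hTD.1.isConnected s t n with h | h
  · exact Or.inl ⟨n, h, hn⟩
  · exact Or.inr ⟨n, h, hn⟩

lemma vside_both (hTD : IsTreeDecomp G T β) {s t : ι} (hst : T.Adj s t) {v : V}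
    (h1 : v ∈ vside T β s t) (h2 : v ∈ vside T β t s) : v ∈ β s ∧ v ∈ β t := by
  obtain ⟨n₁, hn₁, hv₁⟩ := h1
  obtain ⟨n₂, hn₂, hv₂⟩ := h2
  have hcon := hTD.2.2.2 v
  obtain ⟨w0⟩ := hcon.preconnected ⟨n₂, hv₂⟩ ⟨n₁, hv₁⟩
  obtain ⟨w, hw⟩ := walk_induce w0
  have hn₂' : n₂ ∉ tside T s t := fun hc => tside_disj hTD.1 hst n₂ hc hn₂
  have he : s(s, t) ∈ w.edges := tside_cross hn₂' hn₁ w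
  exact ⟨hw s (Walk.fst_mem_support_of_mem_edges w he),
    hw t (Walk.snd_mem_support_of_mem_edges w he)⟩

lemma vside_sep (hTD : IsTreeDecomp G T β) {s t : ι} (hst : T.Adj s t) :
    IsSep G (vside T β s t) (vside T β t s) := by
  constructor
  · ext v; simp only [Set.mem_univ, iff_true]; exact vside_cover hTD s t v
  · rintro a b ⟨haA, haB⟩ ⟨hbB, hbA⟩ hadj
    obtain ⟨n, hna, hnb⟩ := hTD.2.2.1 a b hadj
    rcases tside_cover hTD.1.isConnected s t n with h | h
    · exact hbA ⟨n, h, hnb⟩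
    · exact haB ⟨n, h, hna⟩

lemma vside_order (hTD : IsTreeDecomp G T β) {s t : ι} (hst : T.Adj s t) :
    vside T β s t ∩ vside T β t s ⊆ β s ∩ β t :=
  fun _ hv => vside_both hTD hst hv.1 hv.2

lemma vside_mono_of_tside {s t s' t' : ι} (h : tside T s' t' ⊆ tside T s t) :
    vside T β s' t' ⊆ vside T β s t := fun _ ⟨n, hn, hv⟩ => ⟨n, h hn, hv⟩

/-- an infinite chain of edges with nested far sides, all containing a common node,
is impossible. -/
lemma chain_contra (hT : T.IsTree) (p : ℕ → ι × ι)
    (hadj : ∀ i, T.Adj (p i).1 (p i).2)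
    (hlink : ∀ i, (p (i + 1)).1 = (p i).2)
    (hmono : ∀ i, tside T (p (i + 1)).1 (p (i + 1)).2 ⊆ tside T (p i).1 (p i).2)
    (n : ι) (hn : ∀ i, n ∈ tside T (p i).1 (p i).2) : False := by
  classical
  have hmono' : ∀ i j, i ≤ j → tside T (p j).1 (p j).2 ⊆ tside T (p i).1 (p i).2 := by
    intro i j hij
    induction j with
    | zero => have : i = 0 := Nat.le_zero.mp hij; subst this; exact subset_rfl
    | succ m ih =>
      rcases Nat.lt_or_ge i (m + 1) with h | h
      · exact (hmono m).trans (ih (by omega))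
      · have : i = m + 1 := by omega
        subst this; exact subset_rfl
  have hself : ∀ i, (p i).2 ∈ tside T (p i).1 (p i).2 := fun i => tside_self _ _
  have hnotself : ∀ i, (p i).1 ∉ tside T (p i).1 (p i).2 :=
    fun i hc => tside_disj hT (hadj i) _ hc (tside_self _ _)
  obtain ⟨w⟩ := hT.isConnected.preconnected (p 0).1 n
  have hstart : ∀ i, (p 0).1 ∉ tside T (p i).1 (p i).2 :=
    fun i hc => hnotself 0 (hmono' 0 i (Nat.zero_le i) hc)
  have hedge : ∀ i, s((p i).1, (p i).2) ∈ w.edges :=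
    fun i => tside_cross (hstart i) (hn i) w
  have hne : ∀ i j, i < j → s((p i).1, (p i).2) ≠ s((p j).1, (p j).2) := by
    intro i j hij heq
    have h2' : (p j).2 ∈ tside T (p i).1 (p i).2 := hmono' i j (le_of_lt hij) (hself j)
    have h1 : (p j).1 ∈ tside T (p i).1 (p i).2 := by
      obtain ⟨m, rfl⟩ : ∃ m, j = m + 1 := ⟨j - 1, by omega⟩
      rw [hlink m]
      exact hmono' i m (by omega) (hself m)
    have hmem : (p i).1 = (p j).1 ∨ (p i).1 = (p j).2 := by
      rw [Sym2.eq_iff] at heq; tauto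
    rcases hmem with h | h
    · exact hnotself i (h ▸ h1)
    · exact hnotself i (h ▸ h2')
  set L := w.edges.length with hL
  have hcard : (Finset.univ : Finset (Fin (L + 1))).card ≤ w.edges.toFinset.card := by
    apply Finset.card_le_card_of_injOn (fun i : Fin (L + 1) => s((p i.1).1, (p i.1).2))
    · exact fun i _ => List.mem_toFinset.mpr (hedge i.1)
    · intro i _ j _ h
      by_contra hne'
      rcases Nat.lt_or_ge i.1 j.1 with hlt | hge
      · exact hne i.1 j.1 hlt h
      · have : j.1 < i.1 := by
          rcases Nat.lt_or_ge j.1 i.1 with h1 | h1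
          · exact h1
          · exact absurd (Fin.ext (by omega)) hne'
        exact hne j.1 i.1 this h.symm
  have h1 : (Finset.univ : Finset (Fin (L + 1))).card = L + 1 := by simp
  have h2 : w.edges.toFinset.card ≤ L := List.toFinset_card_le w.edges
  omega

end TD2


section Comp
variable {V : Type*} {G : SimpleGraph V} {ι : Type} {T : SimpleGraph ι} {β : ι → Set V}

/-- `G` with all vertices of `X` isolated. -/
def avoid (G : SimpleGraph V) (X : Set V) : SimpleGraph V where
  Adj a b := G.Adj a b ∧ a ∉ X ∧ b ∉ X
  symm := ⟨fun a b ⟨h1, h2, h3⟩ => ⟨h1.symm, h3, h2⟩⟩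
  loopless := ⟨fun a ⟨h1, _, _⟩ => G.loopless.irrefl a h1⟩

/-- vertex set of the union of a family of components of `G − X`. -/
def cunion (G : SimpleGraph V) (X : Set V)
    (𝒮 : Set ((avoid G X).ConnectedComponent)) : Set V :=
  {v : V | v ∉ X ∧ (avoid G X).connectedComponentMk v ∈ 𝒮}

lemma cunion_sep (G : SimpleGraph V) (X : Set V)
    (𝒮 : Set ((avoid G X).ConnectedComponent)) :
    IsSep G (cunion G X 𝒮 ∪ X) (Set.univ \ cunion G X 𝒮) := by
  constructor
  · ext v
    simp only [Set.mem_univ, iff_true, Set.mem_union, Set.mem_diff]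
    by_cases h : v ∈ cunion G X 𝒮
    · exact Or.inl (Or.inl h)
    · exact Or.inr ⟨trivial, h⟩
  · rintro a b ⟨haA, haB⟩ ⟨hbB, hbA⟩ hadj
    have haU : a ∈ cunion G X 𝒮 := by
      by_contra hc
      exact haB ⟨trivial, hc⟩
    have hbU : b ∉ cunion G X 𝒮 ∧ b ∉ X := by
      constructor
      · exact fun hc => hbA (Or.inl hc)
      · exact fun hc => hbA (Or.inr hc)
    apply hbU.1
    have hmk : (avoid G X).connectedComponentMk a = (avoid G X).connectedComponentMk b :=
      ConnectedComponent.connectedComponentMk_eq_of_adj ⟨hadj, haU.1, hbU.2⟩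
    exact ⟨hbU.2, hmk ▸ haU.2⟩

lemma cunion_order (G : SimpleGraph V) (X : Set V)
    (𝒮 : Set ((avoid G X).ConnectedComponent)) :
    (cunion G X 𝒮 ∪ X) ∩ (Set.univ \ cunion G X 𝒮) = X := by
  ext v
  simp only [Set.mem_inter_iff, Set.mem_union, Set.mem_diff, Set.mem_univ, true_and]
  constructor
  · rintro ⟨h1 | h1, h2⟩
    · exact absurd h1 h2
    · exact h1
  · intro h
    exact ⟨Or.inr h, fun hc => hc.1 h⟩

lemma walk_propagate {H : SimpleGraph V} (P : V → Prop)
    (hstep : ∀ a b, H.Adj a b → P a → P b) :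
    ∀ {a c : V}, H.Walk a c → P a → P c
  | _, _, Walk.nil, h => h
  | _, _, Walk.cons hadj w, h => walk_propagate P hstep w (hstep _ _ hadj h)

lemma comp_propagate {X : Set V} (P : V → Prop)
    (hstep : ∀ a b, (avoid G X).Adj a b → P a → P b) {v₀ v : V}
    (hmk : (avoid G X).connectedComponentMk v = (avoid G X).connectedComponentMk v₀)
    (hP0 : P v₀) : P v := by
  have hreach : (avoid G X).Reachable v₀ v := (ConnectedComponent.eq.mp hmk).symm
  obtain ⟨w⟩ := hreach
  exact walk_propagate P hstep w hP0

/-- every vertex of a component of `G − β t` has all its bags in a single branch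
at the node `t`. -/
lemma comp_side (hTD : IsTreeDecomp G T β) {t : ι} {X : Set V} (hX : X = β t)
    {v₀ : V} (hv₀ : v₀ ∉ X) :
    ∃ s, T.Adj t s ∧ ∀ v, (avoid G X).connectedComponentMk v =
        (avoid G X).connectedComponentMk v₀ →
      (v ∈ vside T β t s ∧ v ∉ vside T β s t) := by
  obtain ⟨n₀, hn₀⟩ := hTD.2.1 v₀
  have hn₀t : n₀ ≠ t := fun hc => hv₀ (hX ▸ (hc ▸ hn₀))
  obtain ⟨s, hts, hn₀s⟩ := tside_branch_exists hTD.1.isConnected hn₀t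
  refine ⟨s, hts, ?_⟩
  intro v hmk
  set P : V → Prop := fun u => u ∈ vside T β t s ∧ u ∉ vside T β s t with hP
  have hstep : ∀ a b, (avoid G X).Adj a b → P a → P b := by
    rintro a b ⟨hadj, haX, hbX⟩ ⟨haP1, haP2⟩
    obtain ⟨n, hna, hnb⟩ := hTD.2.2.1 a b hadj
    rcases tside_cover hTD.1.isConnected t s n with h | h
    · refine ⟨⟨n, h, hnb⟩, fun hc => ?_⟩
      have := vside_both hTD hts.symm hc ⟨n, h, hnb⟩
      exact hbX (hX ▸ this.2)
    · exact absurd ⟨n, h, hna⟩ haP2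
  have hP0 : P v₀ := by
    refine ⟨⟨n₀, hn₀s, hn₀⟩, fun hc => ?_⟩
    have := vside_both hTD hts.symm hc ⟨n₀, hn₀s, hn₀⟩
    exact hv₀ (hX ▸ this.2)
  exact comp_propagate P hstep hmk hP0

end Comp


section Main
variable {V : Type*} [Fintype V] {G : SimpleGraph V} {F : Set V} {k : ℕ}

lemma no_edges_contra (hF : StronglyLinked G F) (hk : 1 ≤ k) (hFcard : F.ncard = 3 * k)
    (hno : ∀ a b : V, ¬G.Adj a b) : False := by
  have hFne : F.Nonempty := by
    rw [← Set.ncard_pos (Set.toFinite _)]; omega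
  obtain ⟨f, hf⟩ := hFne
  have hsep : IsSep G {f} (Set.univ \ {f}) := by
    constructor
    · ext v
      simp only [Set.mem_univ, iff_true, Set.mem_union, Set.mem_diff, Set.mem_singleton_iff]
      by_cases h : v = f
      · exact Or.inl h
      · exact Or.inr ⟨trivial, h⟩
    · intro a b _ _ hadj
      exact hno a b hadj
  have hS2 : F \ {f} ⊆ Set.univ \ {f} := fun v hv => ⟨trivial, hv.2⟩
  have hS2card : (F \ {f}).ncard = 3 * k - 1 := by
    rw [Set.ncard_diff (Set.singleton_subset_iff.mpr hf) (Set.toFinite _),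
      Set.ncard_singleton, hFcard]
  have hS2ne : (F \ {f}).Nonempty := by
    rw [← Set.ncard_pos (Set.toFinite _)]; omega
  have hmin := hF {f} (F \ {f}) {f} (Set.univ \ {f})
    (Set.union_diff_cancel (Set.singleton_subset_iff.mpr hf)) Set.disjoint_sdiff_right
    (Set.singleton_nonempty f) hS2ne hsep subset_rfl hS2
  have hint : ({f} ∩ (Set.univ \ {f}) : Set V) = ∅ := by
    ext v; simp only [Set.mem_inter_iff, Set.mem_singleton_iff, Set.mem_diff,
      Set.mem_univ, true_and, Set.mem_empty_iff_false, iff_false]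
    rintro ⟨rfl, h⟩; exact h rfl
  rw [hint, Set.ncard_empty, Set.ncard_singleton, hS2card] at hmin
  omega

lemma main_contra {ι : Type} {T : SimpleGraph ι} {β : ι → Set V}
    (hk2 : 2 ≤ k) (hF : StronglyLinked G F) (hFcard : F.ncard = 3 * k)
    (hTD : IsTreeDecomp G T β) (hbag : ∀ t : ι, (β t).ncard ≤ k) : False := by
  classical
  have hTree : T.IsTree := hTD.1
  have hV : ∀ v : V, ∃ t : ι, v ∈ β t := hTD.2.1
  -- order bounds for tree-edge separations
  have horder : ∀ s t : ι, T.Adj s t →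
      (vside T β s t ∩ vside T β t s).ncard ≤ (β s ∩ β t).ncard :=
    fun s t h => Set.ncard_le_ncard (vside_order hTD h) (Set.toFinite _)
  have hbagk : ∀ s t : ι, (β s ∩ β t).ncard ≤ k :=
    fun s t => le_trans (Set.ncard_le_ncard Set.inter_subset_left (Set.toFinite _)) (hbag s)
  have hsum : ∀ s t : ι, T.Adj s t →
      3 * k ≤ (F ∩ vside T β s t).ncard + (F ∩ vside T β t s).ncard := by
    intro s t h
    have hcover : F ⊆ (F ∩ vside T β s t) ∪ (F ∩ vside T β t s) := by
      intro v hv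
      rcases vside_cover hTD s t v with h1 | h1
      exacts [Or.inl ⟨hv, h1⟩, Or.inr ⟨hv, h1⟩]
    calc 3 * k = F.ncard := hFcard.symm
      _ ≤ ((F ∩ vside T β s t) ∪ (F ∩ vside T β t s)).ncard :=
          Set.ncard_le_ncard hcover (Set.toFinite _)
      _ ≤ _ := Set.ncard_union_le _ _
  have hdich : ∀ s t : ι, T.Adj s t →
      (F ∩ vside T β s t).ncard ≤ (vside T β s t ∩ vside T β t s).ncard ∨
      (F ∩ vside T β t s).ncard ≤ (vside T β s t ∩ vside T β t s).ncard := by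
    intro s t h
    have h1 := horder s t h
    have h2 := hbagk s t
    exact factB hF hFcard (vside_sep hTD h) (by omega)
  -- heaviness
  have hvy_not_both : ∀ s t : ι, T.Adj s t → 2 * k ≤ (F ∩ vside T β s t).ncard →
      2 * k ≤ (F ∩ vside T β t s).ncard → False := by
    intro s t h h1 h2
    have h3 := hdich s t h
    have h4 := horder s t h
    have h5 := hbagk s t
    omega
  have hvy_or : ∀ s t : ι, T.Adj s t → 2 * k ≤ (F ∩ vside T β s t).ncard ∨
      2 * k ≤ (F ∩ vside T β t s).ncard := by
    intro s t h
    have h3 := hdich s t h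
    have h4 := horder s t h
    have h5 := hbagk s t
    have h6 := hsum s t h
    omega
  -- existence of a sink node
  have hsink : ∃ t : ι, ∀ s : ι, T.Adj t s → (F ∩ vside T β t s).ncard < 2 * k := by
    by_contra hns
    push_neg at hns
    choose nxt hnadj hnhvy using hns
    obtain ⟨t₀⟩ := hTree.isConnected.nonempty
    set u : ℕ → ι := fun i => Nat.rec t₀ (fun _ prev => nxt prev) i with hu
    set p : ℕ → ι × ι := fun i => (u i, u (i + 1)) with hp
    have hpadj : ∀ i, T.Adj (p i).1 (p i).2 := fun i => hnadj (u i)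
    have hphvy : ∀ i, 2 * k ≤ (F ∩ vside T β (p i).1 (p i).2).ncard := fun i => hnhvy (u i)
    have hplink : ∀ i, (p (i + 1)).1 = (p i).2 := fun i => rfl
    have hpne : ∀ i, (p (i + 1)).2 ≠ (p i).1 := by
      intro i hc
      have h1 := hphvy (i + 1)
      rw [show (p (i+1)).1 = (p i).2 from rfl, hc] at h1
      exact hvy_not_both _ _ (hpadj i) (hphvy i) h1
    have hpmono : ∀ i, tside T (p (i + 1)).1 (p (i + 1)).2 ⊆ tside T (p i).1 (p i).2 :=
      fun i => tside_mono hTree (hpadj i) (hpadj (i + 1)) (hpne i)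
    set Bv : ℕ → Set V := fun i => vside T β (p i).2 (p i).1 with hBv
    have hBmono : ∀ i, Bv i ⊆ Bv (i + 1) := by
      intro i
      apply vside_mono_of_tside
      exact tside_mono hTree (hpadj (i + 1)).symm (hpadj i).symm (hpne i).symm
    have hBmono' : ∀ i j, i ≤ j → Bv i ⊆ Bv j := by
      intro i j hij
      induction j with
      | zero => have : i = 0 := Nat.le_zero.mp hij; subst this; exact subset_rfl
      | succ m ih =>
        rcases Nat.lt_or_ge i (m + 1) with h | h
        · exact (ih (by omega)).trans (hBmono m)
        · have : i = m + 1 := by omega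
          subst this; exact subset_rfl
    have hFB : ∀ i, (F ∩ Bv i).ncard ≤ k := by
      intro i
      rcases hdich (p i).1 (p i).2 (hpadj i) with h | h
      · exfalso
        have h1 := hphvy i
        have h2 := horder _ _ (hpadj i)
        have h3 := hbagk (p i).1 (p i).2
        omega
      · exact le_trans h (le_trans (horder _ _ (hpadj i)) (hbagk _ _))
    set g : ℕ → ℕ := fun i => (F \ Bv i).ncard with hg
    have hgmono : ∀ i j, i ≤ j → g j ≤ g i := fun i j hij =>
      Set.ncard_le_ncard (Set.diff_subset_diff_right (hBmono' i j hij)) (Set.toFinite _)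
    obtain ⟨i₀, hi₀⟩ : ∃ i₀, g i₀ = sInf (Set.range g) := Nat.sInf_mem (Set.range_nonempty g)
    have hgconst : ∀ j, i₀ ≤ j → (F \ Bv j) = (F \ Bv i₀) := by
      intro j hj
      apply Set.eq_of_subset_of_ncard_le
        (Set.diff_subset_diff_right (hBmono' i₀ j hj)) _ (Set.toFinite _)
      rw [show (F \ Bv i₀).ncard = g i₀ from rfl, hi₀]
      exact Nat.sInf_le ⟨j, rfl⟩
    have hdcard : ∀ i, (F \ Bv i).ncard + (F ∩ Bv i).ncard = F.ncard := by
      intro i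
      have h5 := Set.ncard_diff_add_ncard_of_subset
        (Set.inter_subset_left : F ∩ Bv i ⊆ F) (Set.toFinite F)
      have h6 : F \ (F ∩ Bv i) = F \ Bv i := by
        ext x; simp only [Set.mem_diff, Set.mem_inter_iff]; tauto
      rw [h6] at h5
      omega
    have hne2 : (F \ Bv i₀).Nonempty := by
      rw [← Set.ncard_pos (Set.toFinite _)]
      have := hdcard i₀
      have := hFB i₀
      omega
    obtain ⟨v, hvF, hvB⟩ := hne2
    have hvAll : ∀ i, v ∉ Bv i := by
      intro i
      rcases le_or_gt i₀ i with h | h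
      · intro hc
        have h7 := hgconst i h
        have : v ∈ F \ Bv i := h7 ▸ (Set.mem_diff v).mpr ⟨hvF, hvB⟩
        exact this.2 hc
      · exact fun hc => hvB (hBmono' i i₀ (le_of_lt h) hc)
    obtain ⟨n, hn⟩ := hV v
    have hnfar : ∀ i, n ∈ tside T (p i).1 (p i).2 := by
      intro i
      rcases tside_cover hTree.isConnected (p i).1 (p i).2 n with h | h
      · exact h
      · exact absurd ⟨n, h, hn⟩ (hvAll i)
    exact chain_contra hTree p hpadj hplink hpmono n hnfar
  obtain ⟨th, hsk⟩ := hsink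
  -- at the sink, every branch carries at most (order) many F-vertices
  have hfar : ∀ s, T.Adj th s → (F ∩ vside T β th s).ncard ≤ (β th ∩ β s).ncard := by
    intro s h
    rcases hdich th s h with h1 | h1
    · exact le_trans h1 (horder th s h)
    · exfalso
      have h2 := hsum th s h
      have h3 := horder th s h
      have h4 := hbagk th s
      have h5 := hsk s h
      omega
  set X := β th with hXdef
  have hmk : X.ncard ≤ k := hbag th
  have hxle : (F ∩ X).ncard ≤ X.ncard :=
    Set.ncard_le_ncard Set.inter_subset_right (Set.toFinite _)
  set cset : (avoid G X).ConnectedComponent → Set V :=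
    fun C => {v | v ∉ X ∧ (avoid G X).connectedComponentMk v = C} with hcsetdef
  -- each component carries at most |X| many F-vertices
  have hcomp_le : ∀ C, (F ∩ cset C).ncard ≤ X.ncard := by
    intro C
    by_cases hex : ∃ v₀, v₀ ∉ X ∧ (avoid G X).connectedComponentMk v₀ = C
    · obtain ⟨v₀, hv₀X, hv₀C⟩ := hex
      obtain ⟨s, hts, hside⟩ := comp_side hTD hXdef hv₀X
      have hsub : F ∩ cset C ⊆ F ∩ vside T β th s := by
        rintro v ⟨hvF, hvX, hvC⟩
        exact ⟨hvF, (hside v (by rw [hvC, hv₀C])).1⟩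
      calc (F ∩ cset C).ncard ≤ (F ∩ vside T β th s).ncard :=
            Set.ncard_le_ncard hsub (Set.toFinite _)
        _ ≤ (β th ∩ β s).ncard := hfar s hts
        _ ≤ X.ncard := Set.ncard_le_ncard Set.inter_subset_left (Set.toFinite _)
    · have hempty : F ∩ cset C = ∅ := by
        ext v
        simp only [Set.mem_inter_iff, Set.mem_empty_iff_false, iff_false]
        rintro ⟨hvF, hvX, hvC⟩
        exact hex ⟨v, hvX, hvC⟩
      rw [hempty, Set.ncard_empty]
      exact Nat.zero_le _
  -- dichotomy for unions of components
  have hdiffid : ∀ (U : Set V), (F \ U).ncard + (F ∩ U).ncard = F.ncard := by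
    intro U
    have h5 := Set.ncard_diff_add_ncard_of_subset
      (Set.inter_subset_left : F ∩ U ⊆ F) (Set.toFinite F)
    have h6 : F \ (F ∩ U) = F \ U := by
      ext x; simp only [Set.mem_diff, Set.mem_inter_iff]; tauto
    rw [h6] at h5
    omega
  have hUdich : ∀ 𝒮 : Set ((avoid G X).ConnectedComponent),
      (F ∩ cunion G X 𝒮).ncard + (F ∩ X).ncard ≤ X.ncard ∨
      3 * k ≤ (F ∩ cunion G X 𝒮).ncard + X.ncard := by
    intro 𝒮
    have hordeq : ((cunion G X 𝒮 ∪ X) ∩ (Set.univ \ cunion G X 𝒮)).ncard = X.ncard := by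
      rw [cunion_order]
    have h3 := factB hF hFcard (cunion_sep G X 𝒮) (by rw [hordeq]; omega)
    rw [hordeq] at h3
    rcases h3 with h3 | h3
    · left
      have hdisj : Disjoint (F ∩ cunion G X 𝒮) (F ∩ X) := by
        rw [Set.disjoint_left]
        rintro v ⟨_, hvU⟩ ⟨_, hvX⟩
        exact hvU.1 hvX
      have huni : F ∩ (cunion G X 𝒮 ∪ X) = (F ∩ cunion G X 𝒮) ∪ (F ∩ X) :=
        Set.inter_union_distrib_left _ _ _
      rw [huni, Set.ncard_union_eq hdisj (Set.toFinite _) (Set.toFinite _)] at h3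
      exact h3
    · right
      have hdiffeq : F ∩ (Set.univ \ cunion G X 𝒮) = F \ cunion G X 𝒮 := by
        ext v
        simp only [Set.mem_inter_iff, Set.mem_diff, Set.mem_univ, true_and]
      rw [hdiffeq] at h3
      have := hdiffid (cunion G X 𝒮)
      omega
  -- maximal family of components
  have hPne : (∅ : Set ((avoid G X).ConnectedComponent)) ∈
      {𝒮 : Set ((avoid G X).ConnectedComponent) |
        (F ∩ cunion G X 𝒮).ncard + (F ∩ X).ncard ≤ X.ncard} := by
    have hemp : cunion G X (∅ : Set ((avoid G X).ConnectedComponent)) = ∅ := by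
      ext v
      simp [cunion]
    simp only [Set.mem_setOf_eq, hemp, Set.inter_empty, Set.ncard_empty, zero_add]
    exact hxle
  obtain ⟨𝒮s, h𝒮P, h𝒮max⟩ := Set.Finite.exists_maximalFor
    (id : Set ((avoid G X).ConnectedComponent) → Set ((avoid G X).ConnectedComponent))
    _ (Set.toFinite _) ⟨∅, hPne⟩
  simp only [Set.mem_setOf_eq] at h𝒮P
  -- 𝒮s is not everything
  have hnotuniv : 𝒮s ≠ Set.univ := by
    intro hc
    have hcov : F ⊆ (F ∩ cunion G X 𝒮s) ∪ (F ∩ X) := by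
      intro v hv
      by_cases hvX : v ∈ X
      · exact Or.inr ⟨hv, hvX⟩
      · exact Or.inl ⟨hv, hvX, by rw [hc]; trivial⟩
    have h1 : F.ncard ≤ (F ∩ cunion G X 𝒮s).ncard + (F ∩ X).ncard :=
      le_trans (Set.ncard_le_ncard hcov (Set.toFinite _)) (Set.ncard_union_le _ _)
    omega
  obtain ⟨C₂, hC₂⟩ := Set.ne_univ_iff_exists_notMem 𝒮s |>.mp hnotuniv
  -- adding C₂ breaks the bound
  have hadd : (F ∩ cunion G X (insert C₂ 𝒮s)).ncard =
      (F ∩ cunion G X 𝒮s).ncard + (F ∩ cset C₂).ncard := by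
    have hsetEq : F ∩ cunion G X (insert C₂ 𝒮s) =
        (F ∩ cunion G X 𝒮s) ∪ (F ∩ cset C₂) := by
      ext v
      simp only [Set.mem_inter_iff, Set.mem_union, cunion, Set.mem_setOf_eq,
        Set.mem_insert_iff, hcsetdef]
      tauto
    have hdisj : Disjoint (F ∩ cunion G X 𝒮s) (F ∩ cset C₂) := by
      rw [Set.disjoint_left]
      rintro v ⟨_, _, hv1⟩ ⟨_, _, hv2⟩
      rw [hv2] at hv1
      exact hC₂ hv1
    rw [hsetEq, Set.ncard_union_eq hdisj (Set.toFinite _) (Set.toFinite _)]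
  have hins : 3 * k ≤ (F ∩ cunion G X 𝒮s).ncard + (F ∩ cset C₂).ncard + X.ncard := by
    rcases hUdich (insert C₂ 𝒮s) with h | h
    · exfalso
      have heq := h𝒮max (j := insert C₂ 𝒮s) h (Set.subset_insert C₂ 𝒮s)
      simp only [id] at heq
      exact hC₂ (heq (Set.mem_insert C₂ 𝒮s))
    · rw [hadd] at h
      exact h
  have hw2le := hcomp_le C₂
  -- the tight configuration
  have hmeq : X.ncard = k := by omega
  have hx0 : (F ∩ X).ncard = 0 := by omega
  have hw2k : (F ∩ cset C₂).ncard = k := by omega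
  -- the set D of F-vertices outside the component C₂
  set D := F \ cset C₂ with hDdef
  have hDcard : D.ncard = 2 * k := by
    have h7 := hdiffid (cset C₂)
    rw [← hDdef] at h7
    omega
  have hDF : D ⊆ F := Set.diff_subset
  -- a representative of C₂ in F
  have hf₂ : (F ∩ cset C₂).Nonempty := by
    rw [← Set.ncard_pos (Set.toFinite _)]
    omega
  obtain ⟨f₂, hf₂F, hf₂X, hf₂C⟩ := hf₂
  -- the invariant of the descent
  set Inv : ι × ι → Prop := fun q =>
    T.Adj q.1 q.2 ∧ β q.2 = X ∧
    (∀ v, (avoid G X).connectedComponentMk v = C₂ →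
      v ∈ vside T β q.1 q.2 ∧ v ∉ vside T β q.2 q.1) ∧
    (∀ v ∈ D, v ∉ vside T β q.1 q.2) with hInvdef
  -- a common piece : bag equality from a k-heavy far side
  have hbagX : ∀ a b : ι, T.Adj a b → β a = X →
      k ≤ (F ∩ vside T β a b).ncard →
      (F ∩ vside T β a b).ncard ≤ (β a ∩ β b).ncard → β b = X := by
    intro a b hab haX hk1 hford
    have h1 : k ≤ (β a ∩ β b).ncard := le_trans hk1 hford
    have h2 : (β a ∩ β b : Set V) ⊆ β b := Set.inter_subset_right
    have h3 : (β b).ncard ≤ k := hbag b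
    have h4 : β a ∩ β b = β b :=
      Set.eq_of_subset_of_ncard_le h2 (by omega) (Set.toFinite _)
    have h5 : β b ⊆ X := by
      rw [← h4, ← haX]
      exact Set.inter_subset_left
    apply Set.eq_of_subset_of_ncard_le h5 _ (Set.toFinite _)
    have h6 : (β b).ncard = (β a ∩ β b : Set V).ncard := by rw [h4]
    omega
  -- the descent step
  have hstep : ∀ q : ι × ι, Inv q → ∃ c : ι,
      Inv (q.2, c) ∧ tside T q.2 c ⊆ tside T q.1 q.2 := by
    rintro ⟨a, b⟩ ⟨hab, hbX, hC, hD2⟩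
    obtain ⟨c, hbc, hside⟩ := comp_side hTD hbX.symm hf₂X
    have hca : c ≠ a := by
      intro hc
      subst hc
      exact (hC f₂ hf₂C).2 (hside f₂ rfl).1
    have htmono : tside T b c ⊆ tside T a b := tside_mono hTree hab hbc hca
    have hvmono : vside T β b c ⊆ vside T β a b := vside_mono_of_tside htmono
    have hD' : ∀ v ∈ D, v ∉ vside T β b c := fun v hv hc => hD2 v hv (hvmono hc)
    have hDsub : D ⊆ F ∩ vside T β c b := by
      intro v hv
      refine ⟨hDF hv, ?_⟩
      rcases vside_cover hTD b c v with h | h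
      · exact absurd h (hD' v hv)
      · exact h
    have h2k : 2 * k ≤ (F ∩ vside T β c b).ncard := by
      rw [← hDcard]
      exact Set.ncard_le_ncard hDsub (Set.toFinite _)
    have hford : (F ∩ vside T β b c).ncard ≤ (vside T β b c ∩ vside T β c b).ncard := by
      rcases hdich b c hbc with h | h
      · exact h
      · exfalso
        have h4 := horder b c hbc
        have h5 := hbagk b c
        omega
    have hCsub : F ∩ cset C₂ ⊆ F ∩ vside T β b c := by
      rintro v ⟨hvF, hvX, hvC⟩
      exact ⟨hvF, (hside v (by rw [hvC, hf₂C])).1⟩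
    have hk1 : k ≤ (F ∩ vside T β b c).ncard := by
      rw [← hw2k]
      exact Set.ncard_le_ncard hCsub (Set.toFinite _)
    have hbceq : β c = X :=
      hbagX b c hbc hbX hk1 (le_trans hford (horder b c hbc))
    refine ⟨c, ⟨hbc, hbceq, ?_, hD'⟩, htmono⟩
    intro v hv
    exact hside v (by rw [hv, hf₂C])
  -- the base of the descent
  have hbase : ∃ q : ι × ι, Inv q := by
    obtain ⟨s₀, hts₀, hside₀⟩ := comp_side hTD hXdef hf₂X
    have hCsub : F ∩ cset C₂ ⊆ F ∩ vside T β th s₀ := by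
      rintro v ⟨hvF, hvX, hvC⟩
      exact ⟨hvF, (hside₀ v (by rw [hvC, hf₂C])).1⟩
    have hford := hfar s₀ hts₀
    have hk1 : k ≤ (F ∩ vside T β th s₀).ncard := by
      rw [← hw2k]
      exact Set.ncard_le_ncard hCsub (Set.toFinite _)
    have hbs₀ : β s₀ = X := hbagX th s₀ hts₀ hXdef.symm hk1 hford
    have hFeq : F ∩ cset C₂ = F ∩ vside T β th s₀ := by
      apply Set.eq_of_subset_of_ncard_le hCsub _ (Set.toFinite _)
      rw [hw2k]
      calc (F ∩ vside T β th s₀).ncard ≤ (X ∩ β s₀).ncard := hford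
        _ ≤ X.ncard := Set.ncard_le_ncard Set.inter_subset_left (Set.toFinite _)
        _ = k := hmeq
    have hDfar : ∀ v ∈ D, v ∉ vside T β th s₀ := by
      rintro v ⟨hvF, hvC⟩ hc
      have hvin : v ∈ F ∩ cset C₂ := hFeq ▸ (⟨hvF, hc⟩ : v ∈ F ∩ vside T β th s₀)
      exact hvC hvin.2
    exact ⟨(th, s₀), hts₀, hbs₀, (fun v hv => hside₀ v (by rw [hv, hf₂C])), hDfar⟩
  -- build the infinite descent and conclude
  obtain ⟨q₀, hq₀⟩ := hbase
  choose nx hnx1 hnx2 using hstep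
  set f : {q : ι × ι // Inv q} → {q : ι × ι // Inv q} :=
    fun q => ⟨(q.1.2, nx q.1 q.2), hnx1 q.1 q.2⟩ with hfdef
  set sq : ℕ → {q : ι × ι // Inv q} := fun i => f^[i] ⟨q₀, hq₀⟩ with hsqdef
  have hsq : ∀ i, sq (i + 1) = f (sq i) := by
    intro i
    rw [hsqdef]
    exact Function.iterate_succ_apply' f i _
  set p : ℕ → ι × ι := fun i => (sq i).1 with hpdef
  have hpadj : ∀ i, T.Adj (p i).1 (p i).2 := fun i => (sq i).2.1
  have hpinv : ∀ i, Inv (p i) := fun i => (sq i).2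
  have hplink : ∀ i, (p (i + 1)).1 = (p i).2 := by
    intro i
    show (sq (i + 1)).1.1 = (sq i).1.2
    rw [hsq i]
  have hpmono : ∀ i, tside T (p (i + 1)).1 (p (i + 1)).2 ⊆ tside T (p i).1 (p i).2 := by
    intro i
    have h1 := hnx2 (sq i).1 (sq i).2
    have h2 : p (i + 1) = ((sq i).1.2, nx (sq i).1 (sq i).2) := by
      show (sq (i + 1)).1 = _
      rw [hsq i]
    rw [h2]
    exact h1
  obtain ⟨n, hn⟩ := hV f₂
  have hnfar : ∀ i, n ∈ tside T (p i).1 (p i).2 := by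
    intro i
    rcases tside_cover hTree.isConnected (p i).1 (p i).2 n with h | h
    · exact h
    · exact absurd ⟨n, h, hn⟩ ((hpinv i).2.2.1 f₂ hf₂C).2
  exact chain_contra hTree p hpadj hplink hpmono n hnfar

end Main
/-- Let `k ≥ 1`, `G` a finite graph and `F` a strongly linked set of size
`3k` in `G`.  Then `tw(G) ≥ k`: every tree-decomposition of `G` has a bag of size at least
`k + 1`. -/
theorem stronglyLinked_treewidth_lb {V : Type*} [Fintype V] (G : SimpleGraph V) (k : ℕ)
    (hk : 1 ≤ k) (F : Set V) (hF : StronglyLinked G F) (hFcard : F.ncard = 3 * k) :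
    ∀ {ι : Type} (T : SimpleGraph ι) (β : ι → Set V),
      IsTreeDecomp G T β → ∃ t : ι, k + 1 ≤ (β t).ncard := by
  intro ι T β hTD
  by_contra hcon
  push_neg at hcon
  have hbag : ∀ t : ι, (β t).ncard ≤ k := by
    intro t
    have := hcon t
    omega
  rcases Nat.lt_or_ge k 2 with hk1 | hk2
  · have hno : ∀ a b : V, ¬G.Adj a b := by
      intro a b hab
      obtain ⟨n, ha, hb⟩ := hTD.2.2.1 a b hab
      have h2 : ({a, b} : Set V) ⊆ β n := by
        intro v hv
        rcases hv with rfl | rfl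
        · exact ha
        · exact hb
      have h3 : ({a, b} : Set V).ncard = 2 := Set.ncard_pair hab.ne
      have h4 := Set.ncard_le_ncard h2 (Set.toFinite _)
      have h5 := hbag n
      omega
    exact no_edges_contra hF hk hFcard hno
  · exact main_contra hk2 hF hFcard hTD hbag
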